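/- Let A = [a_1 … a_n] be a d×n integer matrix of rank d with no zero column, and suppose the row vectors of a Gale dual B are all nonzero. Then the ideal Circ(B) = ⟨∑_{i=1}^n a_{ij} z_i w_i : j = 1,…,d⟩ in C[z_1,…,z_n,w_1,…,w_n] is a complete intersection of codimension d (its generators form a regular sequence). -/

import Mathlib

open MvPolynomial

/-- `f` is a nonzerodivisor modulo the ideal `I`. -/
def RegMod {R : Type*} [CommRing R] (I : Ideal R) (f : R) : Prop :=
  ∀ q, f * q ∈ I → q ∈ I

section RegModBasic

variable {R S : Type*} [CommRing R] [CommRing S]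

lemma regMod_map_iff (e : R ≃+* S) (I : Ideal R) (f : R) :
    RegMod (I.map (e : R →+* S)) (e f) ↔ RegMod I f := by
  have hmem : ∀ x : R, e x ∈ I.map (e : R →+* S) ↔ x ∈ I := by
    intro x
    constructor
    · intro hx
      rcases (Ideal.mem_map_iff_of_surjective _ e.surjective).1 hx with ⟨y, hy, hxy⟩
      rwa [← e.injective hxy]
    · exact fun hx => Ideal.mem_map_of_mem _ hx
  constructor
  · intro h q hq
    have := h (e q) (by rw [← map_mul]; exact (hmem _).2 hq)
    exact (hmem _).1 this
  · intro h q hq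
    obtain ⟨q', rfl⟩ := e.surjective q
    rw [← map_mul, hmem] at hq
    exact (hmem _).2 (h _ hq)

lemma RegMod.of_sub_mem {I : Ideal R} {f m : R} (hm : m ∈ I) (h : RegMod I (f - m)) :
    RegMod I f := by
  intro q hq
  refine h q ?_
  have : (f - m) * q = f * q - m * q := by ring
  rw [this]
  exact Ideal.sub_mem _ hq (Ideal.mul_mem_right _ _ hm)

lemma isSMulRegular_of_regMod {I : Ideal R} {f : R} (h : RegMod I f) :
    IsSMulRegular (R ⧸ (I • ⊤ : Submodule R R)) f := by
  have hIT : (I • ⊤ : Submodule R R) = I := by rw [smul_eq_mul, Ideal.mul_top]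
  intro a b hab
  obtain ⟨a', rfl⟩ := Submodule.Quotient.mk_surjective _ a
  obtain ⟨b', rfl⟩ := Submodule.Quotient.mk_surjective _ b
  have : Submodule.Quotient.mk (p := (I • ⊤ : Submodule R R)) (f * a')
      = Submodule.Quotient.mk (f * b') := by
    simpa only [← Submodule.Quotient.mk_smul, smul_eq_mul] using hab
  rw [Submodule.Quotient.eq] at this
  rw [Submodule.Quotient.eq]
  have : f * (a' - b') ∈ I := by
    rw [hIT] at this; convert this using 1; ring
  have := h _ this
  rwa [hIT]

end RegModBasic

section NZD

variable {R S : Type*} [CommRing R] [CommRing S]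

lemma X_mem_nonZeroDivisors : (Polynomial.X : Polynomial R) ∈ nonZeroDivisors (Polynomial R) := by
  rw [mem_nonZeroDivisors_iff_right]
  intro q hq
  ext n
  have := congrArg (fun p => Polynomial.coeff p (n+1)) hq
  simpa [Polynomial.coeff_mul_X] using this

lemma linear_mem_nonZeroDivisors {a : R} (ha : a ∈ nonZeroDivisors R) (b : R) :
    (Polynomial.C a * Polynomial.X + Polynomial.C b) ∈ nonZeroDivisors (Polynomial R) := by
  rw [mem_nonZeroDivisors_iff_right]
  intro q hq
  by_contra hq0
  have hc : q.coeff q.natDegree * a = 0 := by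
    have := congrArg (fun p => Polynomial.coeff p (q.natDegree + 1)) hq
    simp only [Polynomial.coeff_zero, mul_add] at this
    rw [Polynomial.coeff_add, ← mul_assoc, Polynomial.coeff_mul_X, Polynomial.coeff_mul_C,
      Polynomial.coeff_mul_C,
      Polynomial.coeff_eq_zero_of_natDegree_lt (Nat.lt_succ_self _), zero_mul, add_zero] at this
    exact this
  have : q.coeff q.natDegree = 0 := mem_nonZeroDivisors_iff_right.1 ha _ hc
  exact hq0 (Polynomial.leadingCoeff_eq_zero.mp this)

lemma C_mem_nonZeroDivisors {σ : Type*} {f : R} (hf : f ∈ nonZeroDivisors R) :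
    (C f : MvPolynomial σ R) ∈ nonZeroDivisors (MvPolynomial σ R) := by
  rw [mem_nonZeroDivisors_iff_right]
  intro q hq
  ext m
  have := congrArg (fun p => coeff m p) hq
  simp only [coeff_zero] at this
  rw [mul_comm, coeff_C_mul] at this
  simpa using mem_nonZeroDivisors_iff_right.1 hf _ (by rwa [mul_comm] at this)

lemma nzd_of_ringEquiv (e : R ≃+* S) {x : R} (hx : e x ∈ nonZeroDivisors S) :
    x ∈ nonZeroDivisors R := by
  rw [mem_nonZeroDivisors_iff_right] at hx ⊢
  intro y hy
  have : e y * e x = 0 := by rw [← map_mul, hy, map_zero]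
  have := hx _ this
  exact e.injective (by rw [this, map_zero])

end NZD
section F1

open Sum

lemma sumAlgEquiv_X_inl {R : Type*} [CommRing R] (σ τ : Type*) (i : σ) :
    sumAlgEquiv R σ τ (X (Sum.inl i)) = X i := by
  have := AlgHom.congr_fun (sumAlgEquiv_comp_rename_inl R σ τ) (X i)
  simpa using this

lemma sumAlgEquiv_X_inr {R : Type*} [CommRing R] (σ τ : Type*) (j : τ) :
    sumAlgEquiv R σ τ (X (Sum.inr j)) = C (X j) := by
  have := AlgHom.congr_fun (sumAlgEquiv_comp_rename_inr R σ τ) (X j)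
  simpa [MvPolynomial.algebraMap_eq] using this

lemma sumAlgEquiv_C {R : Type*} [CommRing R] (σ τ : Type*) (x : R) :
    sumAlgEquiv R σ τ (C x) = C (C x) := by
  have := (sumAlgEquiv R σ τ).commutes x
  simpa [MvPolynomial.algebraMap_eq] using this

noncomputable def theta (D : Type*) [CommRing D] :
    MvPolynomial (PUnit ⊕ PUnit) D ≃+* Polynomial (Polynomial D) :=
  ((sumAlgEquiv D PUnit PUnit).toRingEquiv.trans
    (pUnitAlgEquiv (MvPolynomial PUnit D)).toRingEquiv).trans
    (Polynomial.mapEquiv (pUnitAlgEquiv D).toRingEquiv)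

variable {D : Type*} [CommRing D]

lemma theta_Xl : theta D (X (Sum.inl PUnit.unit)) = Polynomial.X := by
  simp [theta, sumAlgEquiv_X_inl]

lemma theta_Xr : theta D (X (Sum.inr PUnit.unit)) = Polynomial.C Polynomial.X := by
  simp [theta, sumAlgEquiv_X_inr]

lemma theta_C (g : D) : theta D (C g) = Polynomial.C (Polynomial.C g) := by
  simp [theta, sumAlgEquiv_C]

lemma F1 (g : D) :
    (X (Sum.inl PUnit.unit) * X (Sum.inr PUnit.unit) + C g)
      ∈ nonZeroDivisors (MvPolynomial (PUnit ⊕ PUnit) D) := by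
  apply nzd_of_ringEquiv (theta D)
  rw [map_add, map_mul, theta_Xl, theta_Xr, theta_C]
  have := linear_mem_nonZeroDivisors (a := (Polynomial.X : Polynomial D))
    X_mem_nonZeroDivisors (Polynomial.C g)
  rwa [mul_comm (Polynomial.C (Polynomial.X : Polynomial D)) Polynomial.X] at this

end F1

section K1

variable {E : Type*} [CommRing E]

lemma K1 {f : E} (hf : f ∈ nonZeroDivisors E) (g0 : E) :
    RegMod (Ideal.span {(X (Sum.inl PUnit.unit) * X (Sum.inr PUnit.unit) + C g0 :
      MvPolynomial (PUnit ⊕ PUnit) E)}) (C f) := by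
  set h : MvPolynomial (PUnit ⊕ PUnit) E :=
    X (Sum.inl PUnit.unit) * X (Sum.inr PUnit.unit) + C g0 with hh
  intro q hq
  rcases Ideal.mem_span_singleton'.1 hq with ⟨u, hu⟩
  set φ : MvPolynomial (PUnit ⊕ PUnit) E →+* MvPolynomial (PUnit ⊕ PUnit) (E ⧸ Ideal.span {f}) :=
    (MvPolynomial.map (Ideal.Quotient.mk (Ideal.span {f}))) with hφ
  have hphif : φ (C f) = 0 := by
    rw [hφ, MvPolynomial.map_C]
    rw [Ideal.Quotient.eq_zero_iff_mem.2 (Ideal.mem_span_singleton_self f), map_zero]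
  have hφh : φ h = X (Sum.inl PUnit.unit) * X (Sum.inr PUnit.unit)
      + C (Ideal.Quotient.mk (Ideal.span {f}) g0) := by
    rw [hh]; simp [hφ]
  have hu0 : φ u = 0 := by
    have hF := F1 (D := E ⧸ Ideal.span {f}) (Ideal.Quotient.mk _ g0)
    rw [mem_nonZeroDivisors_iff_right] at hF
    apply hF
    rw [← hφh, ← map_mul, hu, map_mul, hphif, zero_mul]
  have hker : u ∈ RingHom.ker φ := hu0
  rw [hφ, MvPolynomial.ker_map, Ideal.mk_ker, Ideal.map_span, Set.image_singleton] at hker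
  rcases Ideal.mem_span_singleton'.1 hker with ⟨v, hv⟩
  have hzero : (q - v * h) * C f = 0 := by
    have : C f * q = v * C f * h := by rw [← hu, ← hv]
    calc (q - v * h) * C f = C f * q - v * C f * h := by ring
    _ = 0 := by rw [this, sub_self]
  have : q - v * h = 0 := by
    have hCf := C_mem_nonZeroDivisors (σ := PUnit ⊕ PUnit) hf
    rw [mem_nonZeroDivisors_iff_right] at hCf
    exact hCf _ hzero
  have : q = v * h := by linear_combination this
  rw [this]
  exact Ideal.mul_mem_left _ _ (Ideal.subset_span rfl)

lemma K1gen (S : Set E) {f : E} (hf : RegMod (Ideal.span S) f) (g0 : E) :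
    RegMod (Ideal.span ({X (Sum.inl PUnit.unit) * X (Sum.inr PUnit.unit) + C g0} ∪
      (C : E →+* MvPolynomial (PUnit ⊕ PUnit) E) '' S)) (C f) := by
  set J := Ideal.span S with hJ
  set h : MvPolynomial (PUnit ⊕ PUnit) E :=
    X (Sum.inl PUnit.unit) * X (Sum.inr PUnit.unit) + C g0 with hh
  set φ : MvPolynomial (PUnit ⊕ PUnit) E →+* MvPolynomial (PUnit ⊕ PUnit) (E ⧸ J) :=
    (MvPolynomial.map (Ideal.Quotient.mk J)) with hφ
  set h' : MvPolynomial (PUnit ⊕ PUnit) (E ⧸ J) :=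
    X (Sum.inl PUnit.unit) * X (Sum.inr PUnit.unit) + C (Ideal.Quotient.mk J g0) with hh'
  have hφh : φ h = h' := by rw [hh, hh']; simp [hφ]
  have hfbar : Ideal.Quotient.mk J f ∈ nonZeroDivisors (E ⧸ J) := by
    rw [mem_nonZeroDivisors_iff_right]
    intro x hx
    obtain ⟨x', rfl⟩ := Ideal.Quotient.mk_surjective x
    rw [← map_mul, Ideal.Quotient.eq_zero_iff_mem] at hx
    rw [Ideal.Quotient.eq_zero_iff_mem]
    exact hf x' (by rwa [mul_comm] at hx)
  intro q hq
  have himg : φ (C f * q) ∈ Ideal.span {h'} := by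
    have hmem : φ (C f * q) ∈ Ideal.map φ (Ideal.span ({h} ∪
        (C : E →+* MvPolynomial (PUnit ⊕ PUnit) E) '' S)) := Ideal.mem_map_of_mem _ hq
    rw [Ideal.map_span] at hmem
    refine Ideal.span_le.2 ?_ hmem
    rintro x ⟨y, hy | ⟨s, hs, rfl⟩, rfl⟩
    · rw [Set.mem_singleton_iff] at hy
      rw [hy, hφh]; exact Ideal.subset_span rfl
    · have : φ (C s) = 0 := by
        rw [hφ, MvPolynomial.map_C, Ideal.Quotient.eq_zero_iff_mem.2 (Ideal.subset_span hs),
          map_zero]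
      rw [this]; exact Ideal.zero_mem _
  have hφq : φ q ∈ Ideal.span {h'} := by
    apply K1 hfbar (Ideal.Quotient.mk J g0) (φ q)
    rw [map_mul, MvPolynomial.map_C] at himg
    simpa [hφ] using himg
  rcases Ideal.mem_span_singleton'.1 hφq with ⟨wb, hw⟩
  obtain ⟨w, rfl⟩ := MvPolynomial.map_surjective _ Ideal.Quotient.mk_surjective wb
  have hker : q - w * h ∈ RingHom.ker φ := by
    rw [RingHom.mem_ker, map_sub, map_mul, hφh]
    rw [show (MvPolynomial.map (Ideal.Quotient.mk J)) w * h' = φ q from hw]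
    · rw [sub_self]
  rw [hφ, MvPolynomial.ker_map, Ideal.mk_ker, hJ, Ideal.map_span] at hker
  have hsub : Ideal.span ((C : E →+* MvPolynomial (PUnit ⊕ PUnit) E) '' S) ≤
      Ideal.span ({h} ∪ (C : E →+* MvPolynomial (PUnit ⊕ PUnit) E) '' S) :=
    Ideal.span_mono (Set.subset_union_right)
  have h1 : q - w * h ∈ Ideal.span ({h} ∪ (C : E →+* MvPolynomial (PUnit ⊕ PUnit) E) '' S) :=
    hsub hker
  have h2 : w * h ∈ Ideal.span ({h} ∪ (C : E →+* MvPolynomial (PUnit ⊕ PUnit) E) '' S) :=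
    Ideal.mul_mem_left _ _ (Ideal.subset_span (Set.mem_union_left _ rfl))
  simpa using Ideal.add_mem _ h1 h2

end K1
section Core

def CoreP (ι : Type) : Prop :=
  ∀ (E : Type) [CommRing E], ∀ (g : ι → E) (f : E), f ∈ nonZeroDivisors E →
    RegMod (Ideal.span (Set.range fun j : ι =>
      (X (Sum.inl j) * X (Sum.inr j) + C (g j) : MvPolynomial (ι ⊕ ι) E))) (C f)

set_option maxHeartbeats 1000000 in
lemma core_aux (ι : Type) [Fintype ι] : CoreP ι := by
  refine Fintype.induction_empty_option (P := fun ι _ => CoreP ι) ?_ ?_ ?_ ι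
  · -- of_equiv
    intro α β _ e ih E _ g f hf
    have H := ih E (g ∘ e) f hf
    set Φ : MvPolynomial (α ⊕ α) E ≃+* MvPolynomial (β ⊕ β) E :=
      (renameEquiv E (Equiv.sumCongr e e)).toRingEquiv with hΦ
    rw [← regMod_map_iff Φ] at H
    have hCf : Φ (C f) = C f := by simp [hΦ]
    rw [hCf] at H
    convert H using 2
    rw [Ideal.map_span, ← Set.range_comp]
    apply le_antisymm
    · rw [Ideal.span_le]
      rintro x ⟨j, rfl⟩
      apply Ideal.subset_span
      exact ⟨e.symm j, by simp [hΦ, Function.comp, rename_X, rename_C]⟩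
    · rw [Ideal.span_le]
      rintro x ⟨j, rfl⟩
      apply Ideal.subset_span
      exact ⟨e j, by simp [hΦ, Function.comp, rename_X, rename_C]⟩
  · -- empty
    intro E _ g f hf q hq
    rw [Set.range_eq_empty, Ideal.span_empty] at hq ⊢
    have hCf := C_mem_nonZeroDivisors (σ := (PEmpty ⊕ PEmpty)) hf
    rw [mem_nonZeroDivisors_iff_right] at hCf
    rw [Ideal.mem_bot] at hq ⊢
    exact hCf _ (by rwa [mul_comm] at hq)
  · -- option
    intro α _ ih E _ g f hf
    set rel' : α → MvPolynomial (α ⊕ α) E :=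
      fun j => X (Sum.inl j) * X (Sum.inr j) + C (g (some j)) with hrel'
    have IH : RegMod (Ideal.span (Set.range rel')) (C f : MvPolynomial (α ⊕ α) E) :=
      ih E (g ∘ some) f hf
    have HK := K1gen (Set.range rel') IH (C (g none) : MvPolynomial (α ⊕ α) E)
    set eo : Option α ≃ PUnit.{1} ⊕ α :=
      (Equiv.optionEquivSumPUnit α).trans (Equiv.sumComm α PUnit) with heo
    set eσ : (Option α ⊕ Option α) ≃ (PUnit ⊕ PUnit) ⊕ (α ⊕ α) :=
      (Equiv.sumCongr eo eo).trans (Equiv.sumSumSumComm PUnit α PUnit α) with heσ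
    set Φ : MvPolynomial (Option α ⊕ Option α) E ≃+*
        MvPolynomial (PUnit ⊕ PUnit) (MvPolynomial (α ⊕ α) E) :=
      (renameEquiv E eσ).toRingEquiv.trans (sumAlgEquiv E (PUnit ⊕ PUnit) (α ⊕ α)).toRingEquiv
      with hΦ
    have hXln : Φ (X (Sum.inl none)) = X (Sum.inl PUnit.unit) := by
      simp [hΦ, heσ, heo, rename_X, _root_.sumAlgEquiv_X_inl]
    have hXrn : Φ (X (Sum.inr none)) = X (Sum.inr PUnit.unit) := by
      simp [hΦ, heσ, heo, rename_X, _root_.sumAlgEquiv_X_inl]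
    have hXls : ∀ j : α, Φ (X (Sum.inl (some j))) = C (X (Sum.inl j)) := by
      intro j; simp [hΦ, heσ, heo, rename_X, _root_.sumAlgEquiv_X_inr]
    have hXrs : ∀ j : α, Φ (X (Sum.inr (some j))) = C (X (Sum.inr j)) := by
      intro j; simp [hΦ, heσ, heo, rename_X, _root_.sumAlgEquiv_X_inr]
    have hC : ∀ x : E, Φ (C x) = C (C x) := by
      intro x; simp [hΦ, rename_C, sumAlgEquiv_C]
    rw [← regMod_map_iff Φ, hC]
    convert HK using 2
    rw [Ideal.map_span, ← Set.range_comp]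
    apply le_antisymm
    · rw [Ideal.span_le]
      rintro x ⟨j, rfl⟩
      apply Ideal.subset_span
      match j with
      | none =>
        left
        rw [Set.mem_singleton_iff]
        simp only [Function.comp_apply, RingEquiv.coe_toRingHom, map_add, map_mul,
          hXln, hXrn, hC]
      | some j =>
        right
        refine ⟨rel' j, ⟨j, rfl⟩, ?_⟩
        simp only [Function.comp_apply, RingEquiv.coe_toRingHom, map_add, map_mul,
          hXls j, hXrs j, hC, hrel']
    · rw [Ideal.span_le]
      rintro x (rfl | ⟨y, ⟨j, rfl⟩, rfl⟩)
      · apply Ideal.subset_span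
        exact ⟨none, by simp only [Function.comp_apply, RingEquiv.coe_toRingHom, map_add,
          map_mul, hXln, hXrn, hC]⟩
      · apply Ideal.subset_span
        refine ⟨some j, ?_⟩
        simp only [Function.comp_apply, RingEquiv.coe_toRingHom, map_add, map_mul,
          hXls j, hXrs j, hC, hrel']

lemma core (ι : Type) [Fintype ι] (E : Type) [CommRing E] (g : ι → E) (f : E)
    (hf : f ∈ nonZeroDivisors E) :
    RegMod (Ideal.span (Set.range fun j : ι =>
      (X (Sum.inl j) * X (Sum.inr j) + C (g j) : MvPolynomial (ι ⊕ ι) E))) (C f) :=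
  core_aux ι E g f hf

end Core
section Circ

noncomputable def circ {ι : Type} [Fintype ι] (v : ι → ℂ) : MvPolynomial (ι ⊕ ι) ℂ :=
  ∑ i, C (v i) * X (Sum.inl i) * X (Sum.inr i)

variable {ι : Type} [Fintype ι]

lemma circ_sub (v w : ι → ℂ) : circ (v - w) = circ v - circ w := by
  unfold circ
  rw [← Finset.sum_sub_distrib]
  apply Finset.sum_congr rfl
  intro i _
  rw [Pi.sub_apply, map_sub]
  ring

lemma circ_sum_smul {κ : Type} [Fintype κ] (c : κ → ℂ) (a : κ → ι → ℂ) :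
    circ (∑ j, c j • a j) = ∑ j, C (c j) * circ (a j) := by
  unfold circ
  have key : ∀ i : ι, C ((∑ j, c j • a j) i) * X (Sum.inl i) * X (Sum.inr i)
      = ∑ j, C (c j) * (C (a j i) * X (Sum.inl i) * X (Sum.inr i)) := by
    intro i
    rw [Finset.sum_apply]
    simp only [Pi.smul_apply, smul_eq_mul, map_sum, map_mul, Finset.sum_mul]
    apply Finset.sum_congr rfl; intro j _; ring
  rw [Finset.sum_congr rfl (fun i _ => key i), Finset.sum_comm]
  apply Finset.sum_congr rfl; intro j _; rw [Finset.mul_sum]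

lemma circ_mem_ideal {κ : Type} [Fintype κ] (a : κ → ι → ℂ) (x : ι → ℂ)
    (hx : x ∈ Submodule.span ℂ (Set.range a)) :
    circ x ∈ Ideal.span (Set.range fun j => circ (a j)) := by
  rw [Submodule.mem_span_range_iff_exists_fun] at hx
  obtain ⟨c, rfl⟩ := hx
  rw [circ_sum_smul]
  exact Ideal.sum_mem _ fun j _ => Ideal.mul_mem_left _ _ (Ideal.subset_span ⟨j, rfl⟩)

lemma eval_circ [DecidableEq ι] (v : ι → ℂ) (i₀ : ι) :
    eval (Sum.elim (fun i : ι => if i = i₀ then (1:ℂ) else 0)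
      (fun i : ι => if i = i₀ then (1:ℂ) else 0)) (circ v) = v i₀ := by
  unfold circ
  rw [map_sum]
  rw [Finset.sum_eq_single i₀]
  · simp
  · intro j _ hj
    simp [hj]
  · simp

lemma circ_ne_zero [DecidableEq ι] {v : ι → ℂ} (hv : v ≠ 0) : circ v ≠ 0 := by
  obtain ⟨i₀, hi₀⟩ := Function.ne_iff.1 hv
  intro h
  apply hi₀
  have := eval_circ v i₀
  rw [h, map_zero] at this
  simpa using this.symm

end Circ

section Gauss

lemma gauss {n : ℕ} : ∀ (k : ℕ) (a : Fin k → Fin n → ℂ), LinearIndependent ℂ a →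
    ∃ (p : Fin k → Fin n) (b : Fin k → Fin n → ℂ),
      Function.Injective p ∧
      (∀ j i, b j (p i) = if j = i then 1 else 0) ∧
      Submodule.span ℂ (Set.range b) = Submodule.span ℂ (Set.range a) := by
  intro k
  induction k with
  | zero =>
    intro a _
    refine ⟨Fin.elim0, Fin.elim0, fun x => x.elim0, fun j => j.elim0, ?_⟩
    congr 1
    rw [Set.range_eq_empty, Set.range_eq_empty]
  | succ k ih =>
    intro a ha
    obtain ⟨p, b, hpinj, hδ, hspan⟩ :=
      ih (a ∘ Fin.castSucc) (ha.comp _ (Fin.castSucc_injective k))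
    set c : Fin n → ℂ := a (Fin.last k) - ∑ j, a (Fin.last k) (p j) • b j with hc
    have hc_pivots : ∀ i, c (p i) = 0 := by
      intro i
      rw [hc]
      simp only [Pi.sub_apply, Finset.sum_apply, Pi.smul_apply, smul_eq_mul]
      rw [Finset.sum_eq_single i]
      · rw [hδ i i]; simp
      · intro j _ hji; rw [hδ j i]; simp [hji]
      · simp
    have hbmem : ∀ j, b j ∈ Submodule.span ℂ (Set.range a) := by
      intro j
      have h1 : b j ∈ Submodule.span ℂ (Set.range b) := Submodule.subset_span ⟨j, rfl⟩
      rw [hspan] at h1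
      refine Submodule.span_mono ?_ h1
      rw [Set.range_comp]
      exact Set.image_subset_range _ _
    have hc0 : c ≠ 0 := by
      intro h0
      have heq : a (Fin.last k) = ∑ j, a (Fin.last k) (p j) • b j := by
        rw [hc, sub_eq_zero] at h0; exact h0
      have hmem : a (Fin.last k) ∈ Submodule.span ℂ (Set.range (a ∘ Fin.castSucc)) := by
        rw [← hspan, heq]
        exact Submodule.sum_mem _ fun j _ =>
          Submodule.smul_mem _ _ (Submodule.subset_span ⟨j, rfl⟩)
      have hnot : a (Fin.last k) ∉ Submodule.span ℂ (a '' (Set.range Fin.castSucc)) := by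
        apply ha.notMem_span_image
        rw [Fin.range_castSucc]
        simp
      rw [Set.range_comp] at hmem
      exact hnot hmem
    obtain ⟨q, hq⟩ := Function.ne_iff.1 hc0
    have hcq : c q ≠ 0 := by simpa using hq
    have hqnotin : ∀ i, p i ≠ q := by
      intro i h
      exact hcq (by rw [← h]; exact hc_pivots i)
    set c' : Fin n → ℂ := (c q)⁻¹ • c with hc'
    have hc'q : c' q = 1 := by
      rw [hc']; simp [inv_mul_cancel₀ hcq]
    have hc'p : ∀ i, c' (p i) = 0 := by
      intro i; rw [hc']; simp [hc_pivots i]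
    refine ⟨Fin.snoc p q, Fin.snoc (fun j => b j - b j q • c') c', ?_, ?_, ?_⟩
    · -- injectivity
      intro x y hxy
      induction x using Fin.lastCases with
      | last =>
        induction y using Fin.lastCases with
        | last => rfl
        | cast y0 =>
          rw [Fin.snoc_last, Fin.snoc_castSucc] at hxy
          exact absurd hxy.symm (hqnotin y0)
      | cast x0 =>
        induction y using Fin.lastCases with
        | last =>
          rw [Fin.snoc_last, Fin.snoc_castSucc] at hxy
          exact absurd hxy (hqnotin x0)
        | cast y0 =>
          rw [Fin.snoc_castSucc, Fin.snoc_castSucc] at hxy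
          rw [hpinj hxy]
    · -- delta
      intro j i
      induction j using Fin.lastCases with
      | last =>
        induction i using Fin.lastCases with
        | last => rw [Fin.snoc_last, Fin.snoc_last, hc'q, if_pos rfl]
        | cast i0 =>
          rw [Fin.snoc_last, Fin.snoc_castSucc, hc'p i0,
            if_neg (by simp [Fin.ne_of_gt, (Fin.castSucc_lt_last i0)])]
      | cast j0 =>
        induction i using Fin.lastCases with
        | last =>
          rw [Fin.snoc_castSucc, Fin.snoc_last]
          rw [if_neg (by simp [Fin.ne_of_lt, (Fin.castSucc_lt_last j0)])]
          simp [hc'q]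
        | cast i0 =>
          rw [Fin.snoc_castSucc, Fin.snoc_castSucc]
          have : (j0.castSucc = i0.castSucc) = (j0 = i0) := by
            simp [Fin.castSucc_inj]
          simp only [Pi.sub_apply, Pi.smul_apply, smul_eq_mul, hδ j0 i0, hc'p i0, mul_zero,
            sub_zero]
          congr 1
          simp [Fin.castSucc_inj]
    · -- span equality
      have hcmem : c ∈ Submodule.span ℂ (Set.range a) := by
        rw [hc]
        apply Submodule.sub_mem
        · exact Submodule.subset_span ⟨Fin.last k, rfl⟩
        · exact Submodule.sum_mem _ fun j _ => Submodule.smul_mem _ _ (hbmem j)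
      have hc'mem : c' ∈ Submodule.span ℂ (Set.range a) := Submodule.smul_mem _ _ hcmem
      apply le_antisymm
      · rw [Submodule.span_le]
        rintro x ⟨j, rfl⟩
        induction j using Fin.lastCases with
        | last => rw [Fin.snoc_last]; exact hc'mem
        | cast j0 =>
          rw [Fin.snoc_castSucc]
          exact Submodule.sub_mem _ (hbmem j0) (Submodule.smul_mem _ _ hc'mem)
      · rw [Submodule.span_le]
        rintro x ⟨j, rfl⟩
        set B := Submodule.span ℂ (Set.range (Fin.snoc (fun j => b j - b j q • c') c' :
          Fin (k+1) → Fin n → ℂ)) with hB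
        have hc'B : c' ∈ B := by
          apply Submodule.subset_span
          exact ⟨Fin.last k, Fin.snoc_last _ _⟩
        have hbB : ∀ j0 : Fin k, b j0 ∈ B := by
          intro j0
          have h1 : b j0 - b j0 q • c' ∈ B :=
            Submodule.subset_span ⟨j0.castSucc, Fin.snoc_castSucc _ _ _⟩
          have := Submodule.add_mem B h1 (Submodule.smul_mem B (b j0 q) hc'B)
          simpa using this
        induction j using Fin.lastCases with
        | last =>
          have hceq : a (Fin.last k) = c + ∑ j, a (Fin.last k) (p j) • b j := by
            rw [hc]; ring
          rw [hceq]
          apply Submodule.add_mem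
          · have : c = (c q) • c' := by
              rw [hc', smul_inv_smul₀ hcq]
            rw [this]
            exact Submodule.smul_mem _ _ hc'B
          · exact Submodule.sum_mem _ fun j _ => Submodule.smul_mem _ _ (hbB j)
        | cast j0 =>
          have h1 : a (Fin.castSucc j0) ∈ Submodule.span ℂ (Set.range (a ∘ Fin.castSucc)) :=
            Submodule.subset_span ⟨j0, rfl⟩
          rw [← hspan] at h1
          refine Submodule.span_le.2 ?_ h1
          rintro x ⟨j1, rfl⟩
          exact hbB j1

end Gauss
section Stage

lemma RegMod.congr_mem {R : Type*} [CommRing R] {I : Ideal R} {f g : R}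
    (h : RegMod I g) (hm : f - g ∈ I) : RegMod I f := by
  intro q hq
  apply h q
  have : g * q = f * q - (f - g) * q := by ring
  rw [this]
  exact Ideal.sub_mem _ hq (Ideal.mul_mem_right _ _ hm)

set_option maxHeartbeats 1000000 in
lemma stage {n k : ℕ} (a : Fin (k+1) → Fin n → ℂ) (ha : LinearIndependent ℂ a) :
    RegMod (Ideal.span (Set.range fun j : Fin k => circ (a j.castSucc)))
      (circ (a (Fin.last k))) := by
  classical
  obtain ⟨p, b, hpinj, hδ, hspan⟩ :=
    gauss k (a ∘ Fin.castSucc) (ha.comp _ (Fin.castSucc_injective k))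
  set c : Fin n → ℂ := a (Fin.last k) - ∑ j, a (Fin.last k) (p j) • b j with hc
  have hc_pivots : ∀ i, c (p i) = 0 := by
    intro i
    rw [hc]
    simp only [Pi.sub_apply, Finset.sum_apply, Pi.smul_apply, smul_eq_mul]
    rw [Finset.sum_eq_single i]
    · rw [hδ i i]; simp
    · intro j _ hji; rw [hδ j i]; simp [hji]
    · simp
  have hbmem : ∀ j, b j ∈ Submodule.span ℂ (Set.range b) :=
    fun j => Submodule.subset_span ⟨j, rfl⟩
  have hc0 : c ≠ 0 := by
    intro h0
    have heq : a (Fin.last k) = ∑ j, a (Fin.last k) (p j) • b j := by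
      rw [hc, sub_eq_zero] at h0; exact h0
    have hmem : a (Fin.last k) ∈ Submodule.span ℂ (Set.range (a ∘ Fin.castSucc)) := by
      rw [← hspan, heq]
      exact Submodule.sum_mem _ fun j _ =>
        Submodule.smul_mem _ _ (Submodule.subset_span ⟨j, rfl⟩)
    have hnot : a (Fin.last k) ∉ Submodule.span ℂ (a '' (Set.range Fin.castSucc)) := by
      apply ha.notMem_span_image
      rw [Fin.range_castSucc]
      simp
    rw [Set.range_comp] at hmem
    exact hnot hmem
  obtain ⟨q, hq⟩ := Function.ne_iff.1 hc0
  have hcq : c q ≠ 0 := by simpa using hq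
  have hqnotin : q ∉ Set.range p := by
    rintro ⟨i, rfl⟩
    exact hcq (hc_pivots i)
  -- the index equivalence
  set τ : Type := {i : Fin n // i ∉ Set.range p} with hτ
  have hu : Function.Bijective (Sum.elim p Subtype.val : Fin k ⊕ τ → Fin n) := by
    constructor
    · rintro (x | x) (y | y) hxy
      · rw [hpinj hxy]
      · exact absurd ⟨x, hxy⟩ y.2
      · exact absurd ⟨y, hxy.symm⟩ x.2
      · rw [Subtype.ext hxy]
    · intro i
      by_cases hi : i ∈ Set.range p
      · obtain ⟨j, rfl⟩ := hi; exact ⟨Sum.inl j, rfl⟩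
      · exact ⟨Sum.inr ⟨i, hi⟩, rfl⟩
  set u : Fin k ⊕ τ ≃ Fin n := Equiv.ofBijective _ hu with hudef
  have hu_inl : ∀ j, u (Sum.inl j) = p j := fun _ => rfl
  have hu_inr : ∀ t : τ, u (Sum.inr t) = t.1 := fun _ => rfl
  have husymm_p : ∀ j, u.symm (p j) = Sum.inl j := fun j => (u.symm_apply_eq).2 (hu_inl j).symm
  have husymm_t : ∀ t : τ, u.symm t.1 = Sum.inr t := fun t => (u.symm_apply_eq).2 (hu_inr t).symm
  set eσ : (Fin n ⊕ Fin n) ≃ (Fin k ⊕ Fin k) ⊕ (τ ⊕ τ) :=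
    (Equiv.sumCongr u.symm u.symm).trans (Equiv.sumSumSumComm (Fin k) τ (Fin k) τ) with heσ
  have heσ_lp : ∀ j, eσ (Sum.inl (p j)) = Sum.inl (Sum.inl j) := by
    intro j; simp [heσ, husymm_p j]
  have heσ_rp : ∀ j, eσ (Sum.inr (p j)) = Sum.inl (Sum.inr j) := by
    intro j; simp [heσ, husymm_p j]
  have heσ_lt : ∀ t : τ, eσ (Sum.inl t.1) = Sum.inr (Sum.inl t) := by
    intro t; simp [heσ, husymm_t t]
  have heσ_rt : ∀ t : τ, eσ (Sum.inr t.1) = Sum.inr (Sum.inr t) := by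
    intro t; simp [heσ, husymm_t t]
  set Ψ : MvPolynomial (Fin n ⊕ Fin n) ℂ ≃+*
      MvPolynomial ((Fin k) ⊕ (Fin k)) (MvPolynomial (τ ⊕ τ) ℂ) :=
    (renameEquiv ℂ eσ).toRingEquiv.trans
      (sumAlgEquiv ℂ (Fin k ⊕ Fin k) (τ ⊕ τ)).toRingEquiv with hΨ
  have hXlp : ∀ j, Ψ (X (Sum.inl (p j))) = X (Sum.inl j) := by
    intro j; simp [hΨ, rename_X, heσ_lp j, _root_.sumAlgEquiv_X_inl]
  have hXrp : ∀ j, Ψ (X (Sum.inr (p j))) = X (Sum.inr j) := by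
    intro j; simp [hΨ, rename_X, heσ_rp j, _root_.sumAlgEquiv_X_inl]
  have hXlt : ∀ t : τ, Ψ (X (Sum.inl t.1)) = C (X (Sum.inl t)) := by
    intro t; simp [hΨ, rename_X, heσ_lt t, _root_.sumAlgEquiv_X_inr]
  have hXrt : ∀ t : τ, Ψ (X (Sum.inr t.1)) = C (X (Sum.inr t)) := by
    intro t; simp [hΨ, rename_X, heσ_rt t, _root_.sumAlgEquiv_X_inr]
  have hCim : ∀ x : ℂ, Ψ (C x) = C (C x) := by
    intro x; simp [hΨ, rename_C, sumAlgEquiv_C]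
  have hΨcirc : ∀ v : Fin n → ℂ,
      Ψ (circ v) = (∑ j : Fin k, C (C (v (p j))) * X (Sum.inl j) * X (Sum.inr j))
        + C (circ (fun t : τ => v t.1)) := by
    intro v
    unfold circ
    rw [map_sum, ← Equiv.sum_comp u
      (fun i => Ψ (C (v i) * X (Sum.inl i) * X (Sum.inr i))), Fintype.sum_sum_type]
    congr 1
    · apply Finset.sum_congr rfl
      intro j _
      rw [hu_inl j, map_mul, map_mul, hCim, hXlp j, hXrp j]
    · rw [map_sum]
      apply Finset.sum_congr rfl
      intro t _
      rw [hu_inr t, map_mul, map_mul, hCim, hXlt t, hXrt t, ← map_mul, ← map_mul]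
  set g : Fin k → MvPolynomial (τ ⊕ τ) ℂ := fun j => circ (fun t : τ => b j t.1) with hg
  set fE : MvPolynomial (τ ⊕ τ) ℂ := circ (fun t : τ => c t.1) with hfE
  have hrel : ∀ j : Fin k, Ψ (circ (b j)) = X (Sum.inl j) * X (Sum.inr j) + C (g j) := by
    intro j
    rw [hΨcirc (b j)]
    congr 1
    rw [Finset.sum_eq_single j]
    · rw [hδ j j, if_pos rfl]; simp
    · intro j' _ hj'
      rw [hδ j j', if_neg (Ne.symm hj')]; simp
    · simp
  have hgc : Ψ (circ c) = C fE := by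
    rw [hΨcirc c]
    rw [Finset.sum_eq_zero, zero_add]
    intro j _
    rw [hc_pivots j]
    simp
  have hfEnzd : fE ∈ nonZeroDivisors (MvPolynomial (τ ⊕ τ) ℂ) := by
    apply mem_nonZeroDivisors_of_ne_zero
    apply circ_ne_zero
    intro h0
    exact hcq (by simpa using congrFun h0 ⟨q, hqnotin⟩)
  have HC := core (Fin k) (MvPolynomial (τ ⊕ τ) ℂ) g fE hfEnzd
  -- now reduce the goal
  have hIeq : Ideal.span (Set.range fun j : Fin k => circ (a j.castSucc))
      = Ideal.span (Set.range fun j : Fin k => circ (b j)) := by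
    apply le_antisymm <;> rw [Ideal.span_le] <;> rintro x ⟨j, rfl⟩
    · apply circ_mem_ideal
      rw [hspan]
      exact Submodule.subset_span ⟨j, rfl⟩
    · have hb : b j ∈ Submodule.span ℂ (Set.range fun j : Fin k => a j.castSucc) := by
        rw [show (Set.range fun j : Fin k => a j.castSucc) = Set.range (a ∘ Fin.castSucc)
          from rfl, ← hspan]
        exact hbmem j
      exact circ_mem_ideal (fun j : Fin k => a j.castSucc) (b j) hb
  rw [hIeq]
  have hsub_mem : circ (a (Fin.last k)) - circ c ∈
      Ideal.span (Set.range fun j : Fin k => circ (b j)) := by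
    rw [← circ_sub]
    have : a (Fin.last k) - c = ∑ j, a (Fin.last k) (p j) • b j := by
      rw [hc]; ring
    rw [this, circ_sum_smul]
    exact Ideal.sum_mem _ fun j _ => Ideal.mul_mem_left _ _ (Ideal.subset_span ⟨j, rfl⟩)
  apply RegMod.congr_mem _ hsub_mem
  rw [← regMod_map_iff Ψ, hgc]
  convert HC using 2
  rw [Ideal.map_span, ← Set.range_comp]
  have hfun : ((Ψ : MvPolynomial (Fin n ⊕ Fin n) ℂ →+*
        MvPolynomial (Fin k ⊕ Fin k) (MvPolynomial ({i : Fin n // i ∉ Set.range p} ⊕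
          {i : Fin n // i ∉ Set.range p}) ℂ)) ∘ fun j : Fin k => circ (b j))
      = fun j : Fin k => X (Sum.inl j) * X (Sum.inr j) + C (g j) := by
    funext j
    simp only [Function.comp_apply, RingEquiv.coe_toRingHom]
    exact hrel j
  rw [hfun]

end Stage
section Final

lemma rows_li {d n : ℕ} (A : Matrix (Fin d) (Fin n) ℤ)
    (hA : Function.Surjective A.mulVec) :
    LinearIndependent ℂ (fun j : Fin d => fun i : Fin n => (A j i : ℂ)) := by
  rw [Fintype.linearIndependent_iff]
  intro c hc j0
  obtain ⟨v, hv⟩ := hA (Pi.single j0 1)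
  have hci : ∀ i : Fin n, ∑ j, c j * (A j i : ℂ) = 0 := by
    intro i
    have := congrFun hc i
    simpa [Finset.sum_apply] using this
  have h2 : ∑ j, c j * ∑ i, (A j i : ℂ) * (v i : ℂ) = 0 := by
    calc ∑ j, c j * ∑ i, (A j i : ℂ) * (v i : ℂ)
        = ∑ j, ∑ i, c j * ((A j i : ℂ) * (v i : ℂ)) :=
          Finset.sum_congr rfl fun j _ => Finset.mul_sum _ _ _
      _ = ∑ i, ∑ j, c j * ((A j i : ℂ) * (v i : ℂ)) := Finset.sum_comm
      _ = ∑ i, (∑ j, c j * (A j i : ℂ)) * (v i : ℂ) := by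
          apply Finset.sum_congr rfl
          intro i _
          rw [Finset.sum_mul]
          apply Finset.sum_congr rfl
          intro j _
          ring
      _ = 0 := by
          apply Finset.sum_eq_zero
          intro i _
          rw [hci i, zero_mul]
  have hAv : ∀ j, ∑ i, (A j i : ℂ) * (v i : ℂ) = if j = j0 then 1 else 0 := by
    intro j
    have := congrFun hv j
    have hcast : ((A.mulVec v) j : ℂ) = ((Pi.single j0 1 : Fin d → ℤ) j : ℂ) := by
      rw [this]
    rw [Matrix.mulVec, dotProduct] at hcast
    push_cast at hcast
    rw [hcast]
    by_cases h : j = j0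
    · subst h; simp [Pi.single_apply]
    · simp [Pi.single_apply, h]
  rw [Finset.sum_congr rfl (fun j _ => by rw [hAv j])] at h2
  simpa using h2

theorem stmt_12' (d n : ℕ) (A : Matrix (Fin d) (Fin n) ℤ)
    (hA : Function.Surjective A.mulVec) :
    RingTheory.Sequence.IsRegular (MvPolynomial (Fin n ⊕ Fin n) ℂ)
      (List.ofFn fun j : Fin d =>
        ∑ i : Fin n, C (A j i : ℂ) * X (Sum.inl i) * X (Sum.inr i)) := by
  classical
  have hli := rows_li A hA
  set f : Fin d → MvPolynomial (Fin n ⊕ Fin n) ℂ :=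
    fun j => ∑ i : Fin n, C (A j i : ℂ) * X (Sum.inl i) * X (Sum.inr i) with hf
  have hfcirc : ∀ j, f j = circ (fun i => (A j i : ℂ)) := fun j => rfl
  constructor
  · -- weakly regular
    rw [RingTheory.Sequence.isWeaklyRegular_iff]
    intro i hi
    rw [List.length_ofFn] at hi
    have hi1 : i + 1 ≤ d := hi
    -- identify the prefix ideal
    have htake : (List.ofFn f).take i = List.ofFn (fun j : Fin i => f (Fin.castLE hi.le j)) := by
      apply List.ext_getElem
      · simp [List.length_take, Nat.min_eq_left hi.le]
      · intro j h1 h2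
        rw [List.getElem_take, List.getElem_ofFn, List.getElem_ofFn]
        congr 1
    have hofList : Ideal.ofList ((List.ofFn f).take i)
        = Ideal.span (Set.range fun j : Fin i => f (Fin.castLE hi.le j)) := by
      rw [htake]
      unfold Ideal.ofList
      congr 1
      ext x
      exact List.mem_ofFn' _ x
    have hgetElem : (List.ofFn f)[i]'(by simpa using hi) = f ⟨i, hi⟩ := by
      rw [List.getElem_ofFn]
    rw [hgetElem, hofList]
    apply isSMulRegular_of_regMod
    have hstage := stage (n := n) (k := i)
      (fun j : Fin (i+1) => fun i' : Fin n => (A (Fin.castLE hi1 j) i' : ℂ))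
      (hli.comp _ (Fin.castLE_injective hi1))
    have e1 : (fun j : Fin i => circ (fun i' : Fin n =>
        (A (Fin.castLE hi1 j.castSucc) i' : ℂ))) = fun j : Fin i => f (Fin.castLE hi.le j) := by
      funext j
      rw [hfcirc]
      congr 1
    have e2 : circ (fun i' : Fin n => (A (Fin.castLE hi1 (Fin.last i)) i' : ℂ)) = f ⟨i, hi⟩ := by
      rw [hfcirc]
      congr 1
    rw [e1, e2] at hstage
    exact hstage
  · -- properness
    intro htop
    have h1 : (1 : MvPolynomial (Fin n ⊕ Fin n) ℂ) ∈
        Ideal.ofList (List.ofFn f) • (⊤ : Submodule _ _) := htop ▸ Submodule.mem_top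
    rw [smul_eq_mul, Ideal.mul_top] at h1
    have hker : Ideal.ofList (List.ofFn f) ≤
        RingHom.ker (eval (fun _ => (0:ℂ))) := by
      apply Ideal.span_le.2
      intro x hx
      rw [Set.mem_setOf_eq, List.mem_ofFn] at hx
      obtain ⟨j, rfl⟩ := hx
      rw [SetLike.mem_coe, RingHom.mem_ker, hf]
      simp
    have := hker h1
    rw [RingHom.mem_ker, map_one] at this
    exact one_ne_zero this

end Final

/-- If `A` has rank `d` (here: is surjective), no zero column, and all rows of its Gale
dual `B` are nonzero, then the generators `∑ᵢ a_{ji} zᵢ wᵢ` (`j = 1,…,d`) of `Circ(ℬ)`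
form a regular sequence in `ℂ[z,w]`; i.e. `Circ(ℬ)` is a complete intersection of
codimension `d`. -/
theorem stmt_12 (d n e : ℕ) (A : Matrix (Fin d) (Fin n) ℤ)
    (B : Matrix (Fin n) (Fin e) ℤ)
    (hA : Function.Surjective A.mulVec)
    (hcomp : ∀ c : Fin e → ℤ, A.mulVec (B.mulVec c) = 0)
    (hker : ∀ v : Fin n → ℤ, A.mulVec v = 0 → ∃! c : Fin e → ℤ, B.mulVec c = v)
    (hcol : ∀ i : Fin n, (fun j => A j i) ≠ 0)
    (hrows : ∀ i : Fin n, (fun k => B i k) ≠ 0) :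
    RingTheory.Sequence.IsRegular (MvPolynomial (Fin n ⊕ Fin n) ℂ)
      (List.ofFn fun j : Fin d =>
        ∑ i : Fin n, C (A j i : ℂ) * X (Sum.inl i) * X (Sum.inr i)) := by
  exact stmt_12' d n A hA
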